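/- arXiv:2007.04058 — 4 statements merged into one kernel-verified Lean document; each statement's English description precedes it below -/
import Mathlib

section
/- Let (Ω, F, P) be a probability space, let d ≥ 1, and let K ≥ l ≥ 1 be real numbers. Let Z_K := ℤ^d ∩ [−K/2, K/2]^d. For each y ∈ Z_K let X_y be a square-integrable real random variable with E[X_y²] ≤ σ², and assume that E[X_x · X_y] = 0 whenever x, y ∈ Z_K satisfy ‖x − y‖_∞ ≥ l. Then E[ ( (1/|Z_K|) Σ_{y ∈ Z_K} X_y )² ] ≤ 6^d · (l/K)^d · σ². -/
open MeasureTheory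

lemma aux_integrable_mul {Ω : Type*} [MeasurableSpace Ω] {P : Measure Ω}
    {f g : Ω → ℝ} (hf : MemLp f 2 P) (hg : MemLp g 2 P) :
    Integrable (fun ω => f ω * g ω) P := by
  refine Integrable.mono' (hf.integrable_sq.add hg.integrable_sq)
    (hf.aestronglyMeasurable.mul hg.aestronglyMeasurable)
    (Filter.Eventually.of_forall fun ω => ?_)
  simp only [Pi.add_apply, Real.norm_eq_abs, abs_mul]
  nlinarith [sq_nonneg (|f ω| - |g ω|), sq_abs (f ω), sq_abs (g ω), abs_nonneg (f ω), abs_nonneg (g ω)]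

lemma aux_integral_mul_le {Ω : Type*} [MeasurableSpace Ω] {P : Measure Ω}
    {f g : Ω → ℝ} {σ2 : ℝ} (hf : MemLp f 2 P) (hg : MemLp g 2 P)
    (h1 : ∫ ω, f ω ^ 2 ∂P ≤ σ2) (h2 : ∫ ω, g ω ^ 2 ∂P ≤ σ2) :
    ∫ ω, f ω * g ω ∂P ≤ σ2 := by
  have key : ∫ ω, f ω * g ω ∂P ≤ ∫ ω, (f ω ^ 2 + g ω ^ 2) / 2 ∂P := by
    refine integral_mono (aux_integrable_mul hf hg)
      ((hf.integrable_sq.add hg.integrable_sq).div_const 2) (fun ω => ?_)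
    nlinarith [sq_nonneg (f ω - g ω)]
  have : ∫ ω, (f ω ^ 2 + g ω ^ 2) / 2 ∂P
      = ((∫ ω, f ω ^ 2 ∂P) + ∫ ω, g ω ^ 2 ∂P) / 2 := by
    rw [integral_div, integral_add hf.integrable_sq hg.integrable_sq]
  linarith [key, this.le, this.ge]

lemma aux_count {d : ℕ} (l : ℝ) (hl : 1 ≤ l) (ZK : Finset (Fin d → ℤ)) (x : Fin d → ℤ) :
    ((ZK.filter (fun y => ∀ i, |(x i : ℝ) - (y i : ℝ)| < l)).card : ℝ) ≤ (3 * l) ^ d := by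
  have hsub : ZK.filter (fun y => ∀ i, |(x i : ℝ) - (y i : ℝ)| < l)
      ⊆ Fintype.piFinset (fun i => Finset.Icc (x i - (⌈l⌉ - 1)) (x i + (⌈l⌉ - 1))) := by
    intro y hy
    rw [Finset.mem_filter] at hy
    rw [Fintype.mem_piFinset]
    intro i
    have h := hy.2 i
    have hcast : ((|x i - y i| : ℤ) : ℝ) = |(x i : ℝ) - (y i : ℝ)| := by push_cast; ring_nf
    have hlt : |x i - y i| < ⌈l⌉ := by
      rw [Int.lt_ceil, hcast]; exact h
    rw [Finset.mem_Icc]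
    rcases abs_le.mp (Int.le_sub_one_of_lt hlt) with ⟨h1, h2⟩
    omega
  have hcard := Finset.card_le_card hsub
  have hpi : (Fintype.piFinset (fun i : Fin d => Finset.Icc (x i - (⌈l⌉ - 1)) (x i + (⌈l⌉ - 1)))).card
      = ((2 * ⌈l⌉ - 1).toNat) ^ d := by
    rw [Fintype.card_piFinset]
    have : ∀ i : Fin d, (Finset.Icc (x i - (⌈l⌉ - 1)) (x i + (⌈l⌉ - 1))).card = (2 * ⌈l⌉ - 1).toNat := by
      intro i; rw [Int.card_Icc]; congr 1; ring
    simp [this, Finset.prod_const]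
  have hceil : (⌈l⌉ : ℝ) < l + 1 := Int.ceil_lt_add_one l
  have hc1 : (1 : ℤ) ≤ ⌈l⌉ := Int.one_le_ceil_iff.mpr (by linarith)
  have hN : (((2 * ⌈l⌉ - 1).toNat : ℤ) : ℝ) ≤ 3 * l := by
    have h0 : ((2 * ⌈l⌉ - 1).toNat : ℤ) = 2 * ⌈l⌉ - 1 := Int.toNat_of_nonneg (by linarith)
    rw [h0]
    push_cast
    linarith
  calc ((ZK.filter (fun y => ∀ i, |(x i : ℝ) - (y i : ℝ)| < l)).card : ℝ)
      ≤ (((2 * ⌈l⌉ - 1).toNat : ℕ) ^ d : ℝ) := by exact_mod_cast hpi ▸ hcard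
    _ ≤ (3 * l) ^ d := by
        apply pow_le_pow_left₀ (by positivity)
        exact_mod_cast hN

lemma aux_card {d : ℕ} (K : ℝ) (hK1 : 1 ≤ K) (ZK : Finset (Fin d → ℤ))
    (hZK : ∀ y : Fin d → ℤ, y ∈ ZK ↔ ∀ i : Fin d, |(y i : ℝ)| ≤ K / 2) :
    (K / 2) ^ d ≤ (ZK.card : ℝ) := by
  set M := ⌊K / 2⌋ with hMdef
  have hM0 : (0 : ℤ) ≤ M := Int.floor_nonneg.mpr (by linarith)
  have hfl : (M : ℝ) ≤ K / 2 := Int.floor_le _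
  have hfl2 : K / 2 - 1 < (M : ℝ) := Int.sub_one_lt_floor _
  have heq : ZK = Fintype.piFinset (fun _ : Fin d => Finset.Icc (-M) M) := by
    ext y
    rw [hZK, Fintype.mem_piFinset]
    refine forall_congr' fun i => ?_
    rw [Finset.mem_Icc, abs_le]
    constructor
    · rintro ⟨h1, h2⟩
      refine ⟨?_, Int.le_floor.mpr h2⟩
      rw [neg_le]
      exact Int.le_floor.mpr (by push_cast; linarith)
    · rintro ⟨h1, h2⟩
      have h2' : (y i : ℝ) ≤ (M : ℝ) := by exact_mod_cast h2
      have h1' : ((-M : ℤ) : ℝ) ≤ (y i : ℝ) := by exact_mod_cast h1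
      push_cast at h1'
      constructor <;> linarith
  rw [heq, Fintype.card_piFinset]
  simp only [Finset.prod_const, Finset.card_univ, Fintype.card_fin]
  push_cast
  apply pow_le_pow_left₀ (by linarith)
  rw [Int.card_Icc]
  have h0 : (((M + 1 - -M).toNat : ℤ) : ℝ) = 2 * (M : ℝ) + 1 := by
    rw [Int.toNat_of_nonneg (by linarith)]; push_cast; ring
  rw [show (((M + 1 - -M).toNat : ℕ) : ℝ) = (((M + 1 - -M).toNat : ℤ) : ℝ) by push_cast; ring, h0]
  have hM0' : (0 : ℝ) ≤ (M : ℝ) := by exact_mod_cast hM0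
  rcases le_or_gt 2 K with h | h <;> linarith

/-- variance decay of a spatial average of a finite-range
uncorrelated family of random variables indexed by the lattice points of the
cube `Q_K`. -/
theorem stmt_0
    {Ω : Type*} [MeasurableSpace Ω] (P : Measure Ω) [IsProbabilityMeasure P]
    (d : ℕ) (hd : 1 ≤ d) (K l σ : ℝ) (hl : 1 ≤ l) (hK : l ≤ K)
    (ZK : Finset (Fin d → ℤ))
    (hZK : ∀ y : Fin d → ℤ, y ∈ ZK ↔ ∀ i : Fin d, |(y i : ℝ)| ≤ K / 2)
    (X : (Fin d → ℤ) → Ω → ℝ)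
    (hX2 : ∀ y ∈ ZK, MemLp (X y) 2 P)
    (hvar : ∀ y ∈ ZK, ∫ ω, (X y ω) ^ 2 ∂P ≤ σ ^ 2)
    (hcov : ∀ x ∈ ZK, ∀ y ∈ ZK,
      (∃ i : Fin d, l ≤ |((x i : ℝ) - (y i : ℝ))|) →
      ∫ ω, X x ω * X y ω ∂P = 0) :
    ∫ ω, ((ZK.card : ℝ)⁻¹ * ∑ y ∈ ZK, X y ω) ^ 2 ∂P
      ≤ 6 ^ d * (l / K) ^ d * σ ^ 2 := by
  classical
  have hK1 : (1 : ℝ) ≤ K := le_trans hl hK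
  have hσ : (0 : ℝ) ≤ σ ^ 2 := sq_nonneg σ
  have hcardR : (K / 2) ^ d ≤ (ZK.card : ℝ) := aux_card K hK1 ZK hZK
  have hKpos : (0 : ℝ) < K := by linarith
  have hhalfpos : (0 : ℝ) < (K / 2) ^ d := by positivity
  have hcardpos : (0 : ℝ) < (ZK.card : ℝ) := lt_of_lt_of_le hhalfpos hcardR
  have hint : ∀ x ∈ ZK, ∀ y ∈ ZK, Integrable (fun ω => X x ω * X y ω) P :=
    fun x hx y hy => aux_integrable_mul (hX2 x hx) (hX2 y hy)
  -- expansion of the square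
  have hexp : ∫ ω, ((ZK.card : ℝ)⁻¹ * ∑ y ∈ ZK, X y ω) ^ 2 ∂P
      = ((ZK.card : ℝ)⁻¹) ^ 2 * ∑ x ∈ ZK, ∑ y ∈ ZK, ∫ ω, X x ω * X y ω ∂P := by
    have h1 : ∀ ω, ((ZK.card : ℝ)⁻¹ * ∑ y ∈ ZK, X y ω) ^ 2
        = ((ZK.card : ℝ)⁻¹) ^ 2 * ∑ x ∈ ZK, ∑ y ∈ ZK, X x ω * X y ω := by
      intro ω
      rw [mul_pow, sq (∑ y ∈ ZK, X y ω), Finset.sum_mul_sum]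
    simp_rw [h1]
    rw [integral_const_mul]
    congr 1
    rw [integral_finset_sum _ (fun x hx => integrable_finset_sum _ (fun y hy => hint x hx y hy))]
    exact Finset.sum_congr rfl fun x hx => integral_finset_sum _ (fun y hy => hint x hx y hy)
  -- bound the double sum
  have hinner : ∀ x ∈ ZK, ∑ y ∈ ZK, ∫ ω, X x ω * X y ω ∂P ≤ (3 * l) ^ d * σ ^ 2 := by
    intro x hx
    have step1 : ∑ y ∈ ZK, ∫ ω, X x ω * X y ω ∂P
        ≤ ∑ y ∈ ZK, (if ∀ i, |(x i : ℝ) - (y i : ℝ)| < l then σ ^ 2 else 0) := by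
      refine Finset.sum_le_sum fun y hy => ?_
      by_cases hclose : ∀ i, |(x i : ℝ) - (y i : ℝ)| < l
      · rw [if_pos hclose]
        exact aux_integral_mul_le (hX2 x hx) (hX2 y hy) (hvar x hx) (hvar y hy)
      · rw [if_neg hclose]
        push_neg at hclose
        obtain ⟨i, hi⟩ := hclose
        rw [hcov x hx y hy ⟨i, hi⟩]
    have step2 : ∑ y ∈ ZK, (if ∀ i, |(x i : ℝ) - (y i : ℝ)| < l then σ ^ 2 else 0)
        = ((ZK.filter (fun y => ∀ i, |(x i : ℝ) - (y i : ℝ)| < l)).card : ℝ) * σ ^ 2 := by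
      rw [← Finset.sum_filter, Finset.sum_const, nsmul_eq_mul]
    have step3 : ((ZK.filter (fun y => ∀ i, |(x i : ℝ) - (y i : ℝ)| < l)).card : ℝ) * σ ^ 2
        ≤ (3 * l) ^ d * σ ^ 2 :=
      mul_le_mul_of_nonneg_right (aux_count l hl ZK x) hσ
    calc ∑ y ∈ ZK, ∫ ω, X x ω * X y ω ∂P
        ≤ _ := step1
      _ = _ := step2
      _ ≤ _ := step3
  have hsum : ∑ x ∈ ZK, ∑ y ∈ ZK, ∫ ω, X x ω * X y ω ∂P
      ≤ (ZK.card : ℝ) * ((3 * l) ^ d * σ ^ 2) := by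
    calc ∑ x ∈ ZK, ∑ y ∈ ZK, ∫ ω, X x ω * X y ω ∂P
        ≤ ∑ _x ∈ ZK, (3 * l) ^ d * σ ^ 2 := Finset.sum_le_sum hinner
      _ = (ZK.card : ℝ) * ((3 * l) ^ d * σ ^ 2) := by
          rw [Finset.sum_const, nsmul_eq_mul]
  rw [hexp]
  have hfinal : ((ZK.card : ℝ)⁻¹) ^ 2 * ((ZK.card : ℝ) * ((3 * l) ^ d * σ ^ 2))
      = (3 * l) ^ d * σ ^ 2 / (ZK.card : ℝ) := by
    field_simp
  calc ((ZK.card : ℝ)⁻¹) ^ 2 * ∑ x ∈ ZK, ∑ y ∈ ZK, ∫ ω, X x ω * X y ω ∂P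
      ≤ ((ZK.card : ℝ)⁻¹) ^ 2 * ((ZK.card : ℝ) * ((3 * l) ^ d * σ ^ 2)) :=
        mul_le_mul_of_nonneg_left hsum (by positivity)
    _ = (3 * l) ^ d * σ ^ 2 / (ZK.card : ℝ) := hfinal
    _ ≤ (3 * l) ^ d * σ ^ 2 / (K / 2) ^ d := by
        apply div_le_div_of_nonneg_left (by positivity) hhalfpos hcardR
    _ = 6 ^ d * (l / K) ^ d * σ ^ 2 := by
        have h6 : (6 : ℝ) ^ d * (l / K) ^ d = (3 * l) ^ d / (K / 2) ^ d := by
          rw [← mul_pow, ← div_pow]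
          congr 1
          field_simp
          ring
        rw [h6]
        ring
end

section
/- Let m ≥ 1 be a real number, let δ be a real number with 0 < δ ≤ 1/2, and let k ≥ 1 be an integer with |k/m − 1| ≤ δ. Then m − k·log m + log(k!) ≤ m·δ² + (1/2)·log k + 1. Equivalently, −log( e^{−m} m^k / k! ) ≤ m·δ² + (1/2)·log k + 1. -/
open Real

/-- Stirling upper bound: `log k! ≤ 1 + (1/2) log k + k log k - k` for `k ≥ 1`. -/
lemma log_factorial_le (k : ℕ) (hk : 1 ≤ k) :
    Real.log (Nat.factorial k) ≤ 1 + (1/2) * Real.log k + k * Real.log k - k := by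
  obtain ⟨n, rfl⟩ : ∃ n, k = n + 1 := ⟨k - 1, (Nat.succ_pred_eq_of_pos hk).symm⟩
  have hpos : (0:ℝ) < (n+1 : ℕ) := by positivity
  have hmono := Stirling.log_stirlingSeq'_antitone (Nat.zero_le n)
  simp only [Function.comp_apply, Nat.succ_eq_add_one, zero_add] at hmono
  rw [Stirling.stirlingSeq_one] at hmono
  have hform := Stirling.log_stirlingSeq_formula (n+1)
  have h1 : Real.log (Real.exp 1 / Real.sqrt 2) = 1 - (1/2) * Real.log 2 := by
    rw [Real.log_div (by positivity) (by positivity), Real.log_exp,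
      Real.log_sqrt (by norm_num)]
    ring
  have h2 : Real.log (2 * (n+1 : ℕ)) = Real.log 2 + Real.log (n+1 : ℕ) := by
    rw [Real.log_mul (by norm_num) (by positivity)]
  have h3 : Real.log ((n+1 : ℕ) / Real.exp 1) = Real.log (n+1 : ℕ) - 1 := by
    rw [Real.log_div (by positivity) (by positivity), Real.log_exp]
  rw [hform, h1, h2, h3] at hmono
  nlinarith [hmono]

/-- single-block entropy estimate for a δ-good particle count
(the core of Lemma 5.3 of the paper). -/
theorem stmt_6 (m : ℝ) (hm : 1 ≤ m) (δ : ℝ) (hδ0 : 0 < δ) (hδ1 : δ ≤ 1 / 2)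
    (k : ℕ) (hk : 1 ≤ k) (hkm : |(k : ℝ) / m - 1| ≤ δ) :
    m - (k : ℝ) * Real.log m + Real.log (Nat.factorial k)
      ≤ m * δ ^ 2 + (1 / 2) * Real.log k + 1 := by
  have hm0 : (0:ℝ) < m := by linarith
  have hk0 : (0:ℝ) < (k:ℝ) := by exact_mod_cast hk
  set x : ℝ := (k:ℝ) / m - 1 with hx
  have hxδ : |x| ≤ δ := hkm
  have hxlo : -δ ≤ x := (abs_le.mp hxδ).1
  have hxhi : x ≤ δ := (abs_le.mp hxδ).2
  have hx1 : (0:ℝ) < 1 + x := by nlinarith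
  have hkx : (k:ℝ) = m * (1 + x) := by rw [hx, add_sub_cancel, mul_div_cancel₀ _ (ne_of_gt hm0)]
  -- log(1+x) ≤ x
  have hlog : Real.log (1 + x) ≤ x := by
    have := Real.log_le_sub_one_of_pos hx1
    linarith
  -- (1+x) log(1+x) - x ≤ x²
  have hkey : (1 + x) * Real.log (1 + x) - x ≤ x ^ 2 := by
    nlinarith [hx1, hlog]
  have hlogk : Real.log k = Real.log m + Real.log (1 + x) := by
    rw [hkx, Real.log_mul (ne_of_gt hm0) (ne_of_gt hx1)]
  have hmain : m - (k:ℝ) * Real.log m + ((k:ℝ) * Real.log k - k) ≤ m * δ ^ 2 := by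
    have e1 : m - (k:ℝ) * Real.log m + ((k:ℝ) * Real.log k - k)
        = m * ((1 + x) * Real.log (1 + x) - x) := by
      rw [hlogk, hkx]; ring
    rw [e1]
    have : m * ((1 + x) * Real.log (1 + x) - x) ≤ m * x ^ 2 :=
      mul_le_mul_of_nonneg_left hkey (le_of_lt hm0)
    have hx2 : x ^ 2 ≤ δ ^ 2 := sq_le_sq' hxlo hxhi
    nlinarith
  have hfac := log_factorial_le k hk
  linarith
end

section
/- Let q ≥ 1 be an integer, let m ≥ 1 be a real number, let δ be a real number with 0 < δ ≤ 1/2, and let M = (M_1, …, M_q) ∈ ℕ^q satisfy |M_i/m − 1| ≤ δ for every i. Then −Σ_{i=1}^q log( e^{−m} m^{M_i} / M_i! ) ≤ q·( m·δ² + (1/2)·log(2m) + 1 ). -/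
open Real

lemma log_fact_le (n : ℕ) (hn : 1 ≤ n) :
    Real.log (Nat.factorial n)
      ≤ n * Real.log n - n + (1 / 2) * Real.log n + 1 := by
  obtain ⟨k, rfl⟩ : ∃ k, n = k + 1 := ⟨n - 1, (Nat.succ_pred_eq_of_pos hn).symm⟩
  have h1 : Real.log (Stirling.stirlingSeq (k + 1)) ≤ Real.log (Stirling.stirlingSeq 1) :=
    Stirling.log_stirlingSeq'_antitone (Nat.zero_le k)
  rw [Stirling.log_stirlingSeq_formula, Stirling.stirlingSeq_one] at h1
  have hn0 : (0:ℝ) < ((k:ℝ) + 1) := by positivity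
  have e1 : Real.log (Real.exp 1 / Real.sqrt 2) = 1 - (1/2) * Real.log 2 := by
    rw [Real.log_div (Real.exp_ne_zero 1) (by positivity), Real.log_exp,
      Real.log_sqrt (by norm_num)]
    ring
  have e2 : Real.log (2 * ((k + 1 : ℕ) : ℝ)) = Real.log 2 + Real.log ((k:ℝ) + 1) := by
    push_cast
    exact Real.log_mul (by norm_num) (by positivity)
  have e3 : Real.log (((k + 1 : ℕ) : ℝ) / Real.exp 1) = Real.log ((k:ℝ) + 1) - 1 := by
    push_cast
    rw [Real.log_div (by positivity) (Real.exp_ne_zero 1), Real.log_exp]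
  rw [e1, e2, e3] at h1
  push_cast at h1 ⊢
  linarith

lemma term_le (m : ℝ) (hm : 1 ≤ m) (δ : ℝ) (hδ0 : 0 < δ) (hδ1 : δ ≤ 1 / 2) (N : ℕ)
    (h : |(N : ℝ) / m - 1| ≤ δ) :
    -(Real.log (Real.exp (-m) * m ^ N / (Nat.factorial N)))
      ≤ m * δ ^ 2 + (1 / 2) * Real.log (2 * m) + 1 := by
  have hm0 : (0:ℝ) < m := lt_of_lt_of_le one_pos hm
  obtain ⟨hl, hr⟩ := abs_le.mp h
  have hN1 : 1 ≤ N := by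
    by_contra hc
    interval_cases N
    simp only [Nat.cast_zero, zero_div] at hl
    linarith
  set x : ℝ := (N : ℝ) with hx
  have hx1 : (1:ℝ) ≤ x := by rw [hx]; exact_mod_cast hN1
  have hx0 : (0:ℝ) < x := lt_of_lt_of_le one_pos hx1
  have hfac : (0:ℝ) < (Nat.factorial N : ℝ) := by
    exact_mod_cast Nat.factorial_pos N
  have hlog : Real.log (Real.exp (-m) * m ^ N / (Nat.factorial N))
      = -m + (N : ℝ) * Real.log m - Real.log (Nat.factorial N) := by
    rw [Real.log_div (by positivity) (ne_of_gt hfac),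
      Real.log_mul (Real.exp_ne_zero _) (by positivity), Real.log_exp, Real.log_pow]
  rw [hlog]
  have hfle := log_fact_le N hN1
  -- log(x/m) ≤ x/m - 1
  have hlsub : Real.log (x / m) ≤ x / m - 1 :=
    Real.log_le_sub_one_of_pos (by positivity)
  have hldiv : Real.log (x / m) = Real.log x - Real.log m :=
    Real.log_div (ne_of_gt hx0) (ne_of_gt hm0)
  have key : x * Real.log x - x * Real.log m - (x - m) ≤ m * δ ^ 2 := by
    have h1 : x * (Real.log x - Real.log m) ≤ x * (x / m - 1) := by
      rw [← hldiv]
      exact mul_le_mul_of_nonneg_left hlsub (le_of_lt hx0)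
    have h2 : x * (x / m - 1) - (x - m) = (x - m) ^ 2 / m := by
      field_simp
    have hxe : x / m * m = x := div_mul_cancel₀ x hm0.ne'
    have hr' : (x / m - 1) * m ≤ δ * m := mul_le_mul_of_nonneg_right hr hm0.le
    have hl' : (-δ) * m ≤ (x / m - 1) * m := mul_le_mul_of_nonneg_right hl hm0.le
    have h3 : (x - m) ^ 2 ≤ m ^ 2 * δ ^ 2 := by nlinarith [hr', hl', hxe]
    have h4 : (x - m) ^ 2 / m ≤ m * δ ^ 2 := by
      rw [div_le_iff₀ hm0]
      nlinarith
    nlinarith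
  have hxle : x ≤ 2 * m := by
    have hxe : x / m * m = x := div_mul_cancel₀ x hm0.ne'
    have hr' : (x / m - 1) * m ≤ δ * m := mul_le_mul_of_nonneg_right hr hm0.le
    nlinarith [mul_le_mul_of_nonneg_right hδ1 hm0.le]
  have hlogx : Real.log x ≤ Real.log (2 * m) :=
    Real.log_le_log hx0 hxle
  linarith

/-- entropy bound for a δ-good configuration of `q` blocks
(Lemma 5.3 of the paper). -/
theorem stmt_7 (q : ℕ) (hq : 1 ≤ q) (m : ℝ) (hm : 1 ≤ m)
    (δ : ℝ) (hδ0 : 0 < δ) (hδ1 : δ ≤ 1 / 2)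
    (M : Fin q → ℕ) (hM : ∀ i, |(M i : ℝ) / m - 1| ≤ δ) :
    -(∑ i : Fin q,
        Real.log (Real.exp (-m) * m ^ (M i) / (Nat.factorial (M i))))
      ≤ (q : ℝ) * (m * δ ^ 2 + (1 / 2) * Real.log (2 * m) + 1) := by
  rw [← Finset.sum_neg_distrib]
  calc ∑ i : Fin q, -(Real.log (Real.exp (-m) * m ^ (M i) / (Nat.factorial (M i))))
      ≤ ∑ i : Fin q, (m * δ ^ 2 + (1 / 2) * Real.log (2 * m) + 1) :=
        Finset.sum_le_sum fun i _ => term_le m hm δ hδ0 hδ1 (M i) (hM i)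
    _ = (q : ℝ) * (m * δ ^ 2 + (1 / 2) * Real.log (2 * m) + 1) := by
        rw [Finset.sum_const, Finset.card_univ, Fintype.card_fin, nsmul_eq_mul]
end

section
/- Let φ : ℝ → ℝ be nondecreasing, bounded, and right-continuous, and fix ε > 0. Define Φ(s) := (2/ε²) ∫_0^ε (ε − t) · φ(s + t) dt. Then for every s ∈ ℝ, the right derivative of Φ at s exists and equals (2/ε²) ∫_0^ε ( φ(s + t) − φ(s) ) dt; that is, lim_{h ↘ 0} (Φ(s+h) − Φ(s))/h = (2/ε²) ∫_0^ε ( φ(s + t) − φ(s) ) dt. -/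
open MeasureTheory Filter intervalIntegral Topology

/-- right derivative of the regularized average
`Φ(s) = (2/ε²)∫₀^ε (ε−t)φ(s+t)dt` of a nondecreasing bounded right-continuous
function (the computation behind (eq:E2ds) of the paper). -/
theorem stmt_10
    (φ : ℝ → ℝ) (hmono : Monotone φ) (B : ℝ) (hbdd : ∀ s, |φ s| ≤ B)
    (hrc : ∀ s : ℝ, ContinuousWithinAt φ (Set.Ici s) s)
    (ε : ℝ) (hε : 0 < ε)
    (Φ : ℝ → ℝ)
    (hΦ : ∀ s : ℝ, Φ s = (2 / ε ^ 2) * ∫ t in (0 : ℝ)..ε, (ε - t) * φ (s + t)) :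
    ∀ s : ℝ,
      Tendsto (fun h : ℝ => (Φ (s + h) - Φ s) / h) (nhdsWithin 0 (Set.Ioi 0))
        (nhds ((2 / ε ^ 2) * ∫ t in (0 : ℝ)..ε, (φ (s + t) - φ s))) := by
  intro s
  have hε2 : (0:ℝ) < ε ^ 2 := by positivity
  set c : ℝ := 2 / ε ^ 2 with hc
  have hc0 : 0 < c := by positivity
  have hB0 : (0:ℝ) ≤ B := (abs_nonneg _).trans (hbdd 0)
  have hint : ∀ a b : ℝ, IntervalIntegrable (fun t => φ (s + t)) volume a b :=
    fun a b => Monotone.intervalIntegrable (fun x y hxy => hmono (by simpa using hxy))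
  have hintc : ∀ a b r : ℝ, IntervalIntegrable (fun t => (r - t) * φ (s + t)) volume a b :=
    fun a b r => (hint a b).continuousOn_mul (by fun_prop)
  set T : ℝ := c * ∫ t in (0:ℝ)..ε, (φ (s + t) - φ s) with hT
  have hTval : T = c * ((∫ t in (0:ℝ)..ε, φ (s + t)) - ε * φ s) := by
    rw [hT, intervalIntegral.integral_sub (hint 0 ε) intervalIntegrable_const,
      intervalIntegral.integral_const]
    simp [smul_eq_mul]
  have key : ∀ h ∈ Set.Ioo (0:ℝ) ε,
      |(Φ (s + h) - Φ s) / h - T| ≤ c * (2 * B * h + ε * (φ (s + h) - φ s) + h * |φ s|) := by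
    intro h hh
    obtain ⟨hh0, hhε⟩ := hh
    have hhne : h ≠ 0 := ne_of_gt hh0
    -- change of variable
    have cov : (∫ t in (0:ℝ)..ε, (ε - t) * φ (s + h + t))
        = ∫ t in h..(ε + h), (ε + h - t) * φ (s + t) := by
      have hcv := intervalIntegral.integral_comp_add_right
        (a := (0:ℝ)) (b := ε) (fun t => (ε + h - t) * φ (s + t)) h
      rw [zero_add] at hcv
      rw [← hcv]
      apply intervalIntegral.integral_congr
      intro t _
      have e1 : ε + h - (t + h) = ε - t := by ring
      have e2 : s + (t + h) = s + h + t := by ring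
      simp only [e1, e2]
    have split1 : (∫ t in h..(ε + h), (ε + h - t)*φ (s + t))
        = (∫ t in h..ε, (ε + h - t)*φ (s + t)) + ∫ t in ε..(ε + h), (ε + h - t)*φ (s + t) :=
      (intervalIntegral.integral_add_adjacent_intervals (hintc h ε (ε + h)) (hintc ε (ε + h) (ε + h))).symm
    have split2 : (∫ t in h..ε, (ε + h - t)*φ (s + t))
        = (∫ t in h..ε, (ε - t)*φ (s + t)) + h * ∫ t in h..ε, φ (s + t) := by
      rw [← intervalIntegral.integral_const_mul,
        ← intervalIntegral.integral_add (hintc h ε ε) ((hint h ε).const_mul h)]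
      apply intervalIntegral.integral_congr
      intro t _
      simp only
      ring
    have split3 : (∫ t in (0:ℝ)..ε, (ε - t)*φ (s + t))
        = (∫ t in (0:ℝ)..h, (ε - t)*φ (s + t)) + ∫ t in h..ε, (ε - t)*φ (s + t) :=
      (intervalIntegral.integral_add_adjacent_intervals (hintc 0 h ε) (hintc h ε ε)).symm
    have diff : Φ (s + h) - Φ s = c * (h * (∫ t in h..ε, φ (s + t))
        + (∫ t in ε..(ε + h), (ε + h - t)*φ (s + t)) - (∫ t in (0:ℝ)..h, (ε - t)*φ (s + t))) := by
      rw [hΦ (s + h), hΦ s, cov, split1, split2, split3]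
      ring
    have hE1 : (∫ t in h..ε, φ (s + t)) - (∫ t in (0:ℝ)..ε, φ (s + t))
        = -(∫ t in (0:ℝ)..h, φ (s + t)) := by
      rw [← intervalIntegral.integral_add_adjacent_intervals (hint 0 h) (hint h ε)]
      ring
    have hD : (Φ (s + h) - Φ s)/h - T
        = c * ( (-(∫ t in (0:ℝ)..h, φ (s + t)))
          + (∫ t in ε..(ε + h), (ε + h - t)*φ (s + t))/h
          + (ε * φ s - (∫ t in (0:ℝ)..h, (ε - t)*φ (s + t))/h) ) := by
      rw [diff, hTval, ← hE1]
      field_simp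
      ring
    -- bounds
    have b1 : |-(∫ t in (0:ℝ)..h, φ (s + t))| ≤ B * h := by
      rw [abs_neg]
      have := intervalIntegral.norm_integral_le_of_norm_le_const
        (a := (0:ℝ)) (b := h) (C := B) (f := fun t => φ (s + t))
        (fun x _ => by simpa [Real.norm_eq_abs] using hbdd (s + x))
      simpa [Real.norm_eq_abs, abs_of_pos hh0] using this
    have b2 : |(∫ t in ε..(ε + h), (ε + h - t)*φ (s + t))/h| ≤ B * h := by
      rw [abs_div, abs_of_pos hh0]
      rw [div_le_iff₀ hh0]
      have := intervalIntegral.norm_integral_le_of_norm_le_const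
        (a := ε) (b := ε+h) (C := B * h) (f := fun t => (ε + h - t)*φ (s + t)) ?_
      · calc |∫ t in ε..(ε + h), (ε + h - t)*φ (s + t)| ≤ B * h * |ε + h - ε| := this
          _ = B * h * h := by rw [show ε + h - ε = h by ring, abs_of_pos hh0]
      · intro x hx
        rw [Set.uIoc_of_le (by linarith : ε ≤ ε + h)] at hx
        rw [Real.norm_eq_abs, abs_mul]
        have hx1 : 0 ≤ ε + h - x := by linarith [hx.2]
        have hx2 : ε + h - x ≤ h := by linarith [hx.1]
        calc |ε + h - x| * |φ (s + x)| ≤ h * B := by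
              apply mul_le_mul (by rwa [abs_of_nonneg hx1]) (hbdd _) (abs_nonneg _) hh0.le
          _ = B * h := mul_comm _ _
    have b3 : |ε * φ s - (∫ t in (0:ℝ)..h, (ε - t)*φ (s + t))/h|
        ≤ ε * (φ (s + h) - φ s) + h * |φ s| := by
      have e3 : ε * φ s - (∫ t in (0:ℝ)..h, (ε - t)*φ (s + t))/h
          = -(∫ t in (0:ℝ)..h, ((ε - t)*φ (s + t) - ε * φ s))/h := by
        rw [intervalIntegral.integral_sub (hintc 0 h ε) intervalIntegrable_const,
          intervalIntegral.integral_const]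
        field_simp
        ring
      rw [e3, abs_div, abs_neg, abs_of_pos hh0, div_le_iff₀ hh0]
      have := intervalIntegral.norm_integral_le_of_norm_le_const
        (a := (0:ℝ)) (b := h) (C := ε * (φ (s + h) - φ s) + h * |φ s|)
        (f := fun t => (ε - t)*φ (s + t) - ε * φ s) ?_
      · calc |∫ t in (0:ℝ)..h, ((ε - t)*φ (s + t) - ε * φ s)|
            ≤ (ε * (φ (s + h) - φ s) + h * |φ s|) * |h - 0| := this
          _ = (ε * (φ (s + h) - φ s) + h * |φ s|) * h := by rw [sub_zero, abs_of_pos hh0]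
      · intro x hx
        rw [Set.uIoc_of_le hh0.le] at hx
        obtain ⟨hx0, hxh⟩ := hx
        have m0 : 0 ≤ φ (s+x) - φ s := sub_nonneg.2 (hmono (by linarith))
        have m1 : φ (s+x) - φ s ≤ φ (s + h) - φ s := sub_le_sub_right (hmono (by linarith)) _
        have e4 : (ε - x)*φ (s + x) - ε * φ s = (ε - x)*(φ (s + x) - φ s) - x * φ s := by ring
        simp only [Real.norm_eq_abs]
        rw [e4]
        calc |(ε - x)*(φ (s + x) - φ s) - x * φ s|
            ≤ |(ε - x)*(φ (s + x) - φ s)| + |x * φ s| := abs_sub _ _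
          _ ≤ ε * (φ (s + h) - φ s) + h * |φ s| := by
            apply add_le_add
            · rw [abs_mul, abs_of_nonneg (by linarith : (0:ℝ) ≤ ε - x), abs_of_nonneg m0]
              exact mul_le_mul (by linarith) m1 m0 hε.le
            · rw [abs_mul, abs_of_nonneg hx0.le]
              exact mul_le_mul_of_nonneg_right hxh (abs_nonneg _)
    calc |(Φ (s + h) - Φ s) / h - T|
        = c * |(-(∫ t in (0:ℝ)..h, φ (s + t)))
          + (∫ t in ε..(ε + h), (ε + h - t)*φ (s + t))/h
          + (ε * φ s - (∫ t in (0:ℝ)..h, (ε - t)*φ (s + t))/h)| := by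
          rw [hD, abs_mul, abs_of_pos hc0]
      _ ≤ c * (|-(∫ t in (0:ℝ)..h, φ (s + t))|
          + |(∫ t in ε..(ε + h), (ε + h - t)*φ (s + t))/h|
          + |ε * φ s - (∫ t in (0:ℝ)..h, (ε - t)*φ (s + t))/h|) :=
          mul_le_mul_of_nonneg_left (abs_add_three _ _ _) hc0.le
      _ ≤ c * (B * h + B * h + (ε * (φ (s + h) - φ s) + h * |φ s|)) := by
          apply mul_le_mul_of_nonneg_left _ hc0.le
          exact add_le_add (add_le_add b1 b2) b3
      _ = c * (2 * B * h + ε * (φ (s + h) - φ s) + h * |φ s|) := by ring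
  -- limit of the bound
  have hφt : Tendsto (fun h : ℝ => φ (s + h)) (𝓝[>] (0:ℝ)) (𝓝 (φ s)) := by
    have hmap : Tendsto (fun h : ℝ => s + h) (𝓝[>] (0:ℝ)) (𝓝[Set.Ici s] s) := by
      apply tendsto_nhdsWithin_of_tendsto_nhds_of_eventually_within
      · have : Tendsto (fun h : ℝ => s + h) (𝓝 (0:ℝ)) (𝓝 s) := by
          simpa using (continuous_add_left s).tendsto (0:ℝ)
        exact this.mono_left nhdsWithin_le_nhds
      · filter_upwards [self_mem_nhdsWithin] with x hx
        exact le_add_of_nonneg_right (le_of_lt (Set.mem_Ioi.mp hx))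
    exact Filter.Tendsto.comp (hrc s) hmap
  have idt : Tendsto (fun h : ℝ => h) (𝓝[>] (0:ℝ)) (𝓝 0) :=
    tendsto_id.mono_left nhdsWithin_le_nhds
  have hg : Tendsto (fun h : ℝ => c * (2*B*h + ε*(φ (s + h) - φ s) + h*|φ s|))
      (𝓝[>] (0:ℝ)) (𝓝 0) := by
    have h0 : Tendsto (fun _ : ℝ => φ s) (𝓝[>] (0:ℝ)) (𝓝 (φ s)) := tendsto_const_nhds
    have := (((idt.const_mul (2*B)).add ((hφt.sub h0).const_mul ε)).add
      (idt.mul_const |φ s|)).const_mul c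
    simpa using this
  have habs0 : Tendsto (fun h : ℝ => |(Φ (s + h) - Φ s)/h - T|) (𝓝[>] (0:ℝ)) (𝓝 0) := by
    apply squeeze_zero' (Filter.Eventually.of_forall fun h => abs_nonneg _) _ hg
    filter_upwards [Ioo_mem_nhdsGT_of_mem ⟨le_refl (0:ℝ), hε⟩] with h hh
    exact key h hh
  rw [tendsto_iff_norm_sub_tendsto_zero]
  simpa [Real.norm_eq_abs] using habs0
end
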